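/- Let κ be an infinite set and S the set of balanced triples (A,B,C) ∈ F(κ)³ with C \ m(A,B,C) finite. The map f(A,B,C) = (κ\A, κ\(B∪C), κ\(A∪B∪C)) maps S into S. -/
import Mathlib


open Set

/-- `m(X,Y,Z) = (X∩Y) ∪ (X∩Z) ∪ (Y∩Z)`. -/
def mSet {κ : Type*} (X Y Z : Set κ) : Set κ := (X ∩ Y) ∪ (X ∩ Z) ∪ (Y ∩ Z)

/-- The finite/cofinite algebra on `κ`. -/
def FinCofin (κ : Type*) : Set (Set κ) := {X | X.Finite ∨ Xᶜ.Finite}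

/-- A triple of sets is balanced if its pairwise intersections coincide. -/
def BalancedT {κ : Type*} (t : Set κ × Set κ × Set κ) : Prop :=
  t.1 ∩ t.2.1 = t.1 ∩ t.2.2 ∧ t.1 ∩ t.2.2 = t.2.1 ∩ t.2.2

/-- The set `T` of triples from `F(κ)³` with `C \ m(A,B,C)` finite. -/
def Tset (κ : Type*) : Set (Set κ × Set κ × Set κ) :=
  {t | t.1 ∈ FinCofin κ ∧ t.2.1 ∈ FinCofin κ ∧ t.2.2 ∈ FinCofin κ ∧
    (t.2.2 \ mSet t.1 t.2.1 t.2.2).Finite}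

/-- The lattice `S` of balanced triples in `T`. -/
def Sset (κ : Type*) : Set (Set κ × Set κ × Set κ) :=
  {t | BalancedT t ∧ t ∈ Tset κ}

/-- Componentwise meet (intersection) of triples. -/
def meetT {κ : Type*} (t u : Set κ × Set κ × Set κ) : Set κ × Set κ × Set κ :=
  (t.1 ∩ u.1, t.2.1 ∩ u.2.1, t.2.2 ∩ u.2.2)

/-- The balanced closure of a triple of sets. -/
def clT {κ : Type*} (t : Set κ × Set κ × Set κ) : Set κ × Set κ × Set κ :=
  (t.1 ∪ (t.2.1 ∩ t.2.2), t.2.1 ∪ (t.1 ∩ t.2.2), t.2.2 ∪ (t.1 ∩ t.2.1))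

/-- Join of balanced triples: balanced closure of the componentwise union. -/
def joinT {κ : Type*} (t u : Set κ × Set κ × Set κ) : Set κ × Set κ × Set κ :=
  clT (t.1 ∪ u.1, t.2.1 ∪ u.2.1, t.2.2 ∪ u.2.2)

/-- The Banaschewski map `f(A,B,C) = (κ\A, κ\(B∪C), κ\(A∪B∪C))`. -/
def fT {κ : Type*} (t : Set κ × Set κ × Set κ) : Set κ × Set κ × Set κ :=
  (t.1ᶜ, (t.2.1 ∪ t.2.2)ᶜ, (t.1 ∪ t.2.1 ∪ t.2.2)ᶜ)

/-- The map `g(A,C) = (A, A∩C, C)`. -/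
def gT {κ : Type*} (p : Set κ × Set κ) : Set κ × Set κ × Set κ :=
  (p.1, p.1 ∩ p.2, p.2)

/-- The maximal Boolean sublattice `B = g(A)`. -/
def Bset (κ : Type*) : Set (Set κ × Set κ × Set κ) :=
  {t | ∃ A C : Set κ, A ∈ FinCofin κ ∧ C ∈ FinCofin κ ∧ (symmDiff A C).Finite ∧
    t = (A, A ∩ C, C)}


lemma compl_mem_finCofin {κ : Type*} {X : Set κ} (h : X ∈ FinCofin κ) : Xᶜ ∈ FinCofin κ := by
  rcases h with h | h
  · exact Or.inr (by simpa using h)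
  · exact Or.inl h

lemma union_mem_finCofin {κ : Type*} {X Y : Set κ} (hX : X ∈ FinCofin κ) (hY : Y ∈ FinCofin κ) :
    X ∪ Y ∈ FinCofin κ := by
  rcases hX with hX | hX
  · rcases hY with hY | hY
    · exact Or.inl (hX.union hY)
    · exact Or.inr (hY.subset (by rw [Set.compl_union]; exact Set.inter_subset_right))
  · exact Or.inr (hX.subset (by rw [Set.compl_union]; exact Set.inter_subset_left))

theorem stmt7 {κ : Type*} [Infinite κ] (t : Set κ × Set κ × Set κ) (ht : t ∈ Sset κ) :
    fT t ∈ Sset κ := by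
  obtain ⟨A, B, C⟩ := t
  obtain ⟨_, hA, hB, hC, _⟩ := ht
  refine ⟨⟨?_, ?_⟩, ?_, ?_, ?_, ?_⟩
  · show Aᶜ ∩ (B ∪ C)ᶜ = Aᶜ ∩ (A ∪ B ∪ C)ᶜ
    ext x; simp; tauto
  · show Aᶜ ∩ (A ∪ B ∪ C)ᶜ = (B ∪ C)ᶜ ∩ (A ∪ B ∪ C)ᶜ
    ext x; simp; tauto
  · exact compl_mem_finCofin hA
  · exact compl_mem_finCofin (union_mem_finCofin hB hC)
  · exact compl_mem_finCofin (union_mem_finCofin (union_mem_finCofin hA hB) hC)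
  · have : ((A ∪ B ∪ C)ᶜ \ mSet Aᶜ (B ∪ C)ᶜ (A ∪ B ∪ C)ᶜ) = ∅ := by
      ext x; simp [mSet]; tauto
    show ((A ∪ B ∪ C)ᶜ \ mSet Aᶜ (B ∪ C)ᶜ (A ∪ B ∪ C)ᶜ).Finite
    rw [this]; exact Set.finite_empty
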